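/- Let D be a virtual knot diagram with cut system P, and let φ(D,P) be its converted normal diagram (a 2-component virtual link diagram). Then the linking number of φ(D,P), defined as half the sum of signs of non-self classical crossings, equals the odd writhe of D, defined as the sum of signs of the odd classical crossings of D. -/

import Mathlib

open scoped Classical

/-- Cyclic strict betweenness on `ZMod N`. -/
def strictBtw {N : ℕ} (a b x : ZMod N) : Prop :=
  (x - a).val < (b - a).val ∧ x ≠ a

/-- `P` is a cut system: an alternate orientation exists (labels flip exactly at
cut points and chord endpoints, and the two endpoints of each chord carry
opposite labels). -/
def IsCutSystem {N : ℕ} (chords : Finset (ZMod N × ZMod N))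
    (E P : Finset (ZMod N)) : Prop :=
  ∃ ε : ZMod N → ZMod 2,
    (∀ x : ZMod N, ε (x + 1) = ε x + (if x + 1 ∈ P then 1 else 0)
        + (if x + 1 ∈ E then 1 else 0)) ∧
    (∀ c ∈ chords, ε c.1 ≠ ε c.2)

/-- A chord is odd if the arc from its tail to its head contains an odd number
of chord endpoints. -/
def IsOddChord {N : ℕ} (E : Finset (ZMod N)) (c : ZMod N × ZMod N) : Prop :=
  Odd ((E.filter (fun x => strictBtw c.1 c.2 x)).card)

/-- Successor in the double covering `φ(D,P)`: two copies (`false` = the copy of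
`D`, `true` = the mirror copy `D*`) of the circle, crossing to the other copy
exactly when passing a cut point. -/
def coverSucc {N : ℕ} (P : Finset (ZMod N)) (x : ZMod N × Bool) :
    ZMod N × Bool :=
  if x.1 + 1 ∈ P then (x.1 + 1, !x.2) else (x.1 + 1, x.2)

/-- Two positions of the double covering lie on the same component. -/
def SameComp {N : ℕ} (P : Finset (ZMod N)) (x y : ZMod N × Bool) : Prop :=
  ∃ k : ℕ, (coverSucc P)^[k] x = y ∨ (coverSucc P)^[k] y = x

namespace LinkAux

lemma odd_iff_cast (k : ℕ) : Odd k ↔ (k : ZMod 2) = 1 := by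
  rw [Nat.odd_iff, ← ZMod.natCast_mod k 2]
  have h2 : k % 2 = 0 ∨ k % 2 = 1 := by omega
  rcases h2 with h | h <;> rw [h] <;> simp <;> decide

variable {N : ℕ} [NeZero N]

noncomputable def cnt (S : Finset (ZMod N)) (a : ZMod N) (k : ℕ) : ℕ :=
  ((Finset.range k).filter (fun j => a + ((j + 1 : ℕ) : ZMod N) ∈ S)).card

lemma cnt_zero (S : Finset (ZMod N)) (a : ZMod N) : cnt S a 0 = 0 := by
  simp [cnt]

lemma cnt_succ (S : Finset (ZMod N)) (a : ZMod N) (k : ℕ) :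
    cnt S a (k + 1) = cnt S a k + (if a + ((k + 1 : ℕ) : ZMod N) ∈ S then 1 else 0) := by
  unfold cnt
  rw [Finset.range_add_one, Finset.filter_insert]
  by_cases h : a + ((k + 1 : ℕ) : ZMod N) ∈ S
  · rw [if_pos h, if_pos h, Finset.card_insert_of_notMem (by simp)]
  · rw [if_neg h, if_neg h]; ring

lemma cnt_split (S : Finset (ZMod N)) (a : ZMod N) (m n : ℕ) :
    cnt S a (m + n) = cnt S a m + cnt S (a + (m : ℕ)) n := by
  induction n with
  | zero => simp [cnt_zero]
  | succ n ih =>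
      rw [← Nat.add_assoc, cnt_succ, cnt_succ, ih]
      have : a + ((m + n + 1 : ℕ) : ZMod N) = a + (m : ℕ) + ((n + 1 : ℕ) : ZMod N) := by
        push_cast; ring
      rw [this]; ring

lemma cnt_filter (S : Finset (ZMod N)) (a : ZMod N) (k : ℕ) (hk : k < N) :
    cnt S a k = (S.filter (fun x => x ≠ a ∧ (x - a).val ≤ k)).card := by
  apply Finset.card_bij (fun j _ => a + ((j + 1 : ℕ) : ZMod N))
  · intro j hj
    simp only [Finset.mem_filter, Finset.mem_range] at hj ⊢
    have hjv : ((j + 1 : ℕ) : ZMod N).val = j + 1 := ZMod.val_cast_of_lt (by omega)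
    have hsub : a + ((j + 1 : ℕ) : ZMod N) - a = ((j + 1 : ℕ) : ZMod N) := by ring
    refine ⟨hj.2, ?_, ?_⟩
    · intro h
      have : ((j + 1 : ℕ) : ZMod N) = 0 := by
        have := sub_eq_zero.mpr h; rwa [hsub] at this
      rw [← ZMod.val_eq_zero, hjv] at this; omega
    · rw [hsub, hjv]; omega
  · intro j hj j' hj' h
    simp only [Finset.mem_filter, Finset.mem_range] at hj hj'
    have h' : ((j + 1 : ℕ) : ZMod N) = ((j' + 1 : ℕ) : ZMod N) := by
      exact add_left_cancel h
    have := congrArg ZMod.val h'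
    rw [ZMod.val_cast_of_lt (by omega), ZMod.val_cast_of_lt (by omega)] at this
    omega
  · intro x hx
    simp only [Finset.mem_filter] at hx
    obtain ⟨hxS, hxa, hxv⟩ := hx
    have hpos : 0 < (x - a).val := by
      rcases Nat.eq_zero_or_pos (x - a).val with h | h
      · exfalso; rw [ZMod.val_eq_zero, sub_eq_zero] at h; exact hxa h
      · exact h
    refine ⟨(x - a).val - 1, ?_, ?_⟩
    · simp only [Finset.mem_filter, Finset.mem_range]
      have h1 : (x - a).val - 1 + 1 = (x - a).val := by omega
      constructor
      · omega
      · rw [h1]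
        have : (((x - a).val : ℕ) : ZMod N) = x - a := by
          simp [ZMod.natCast_val, ZMod.cast_id]
        rw [this]; ring_nf; simpa using hxS
    · have h1 : (x - a).val - 1 + 1 = (x - a).val := by omega
      rw [h1]
      have : (((x - a).val : ℕ) : ZMod N) = x - a := by
        simp [ZMod.natCast_val, ZMod.cast_id]
      rw [this]; ring

lemma cnt_univ (S : Finset (ZMod N)) (a : ZMod N) : cnt S a N = S.card := by
  have hN : 0 < N := Nat.pos_of_ne_zero (NeZero.ne N)
  have hstep := cnt_succ S a (N - 1)
  rw [show N - 1 + 1 = N from by omega] at hstep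
  rw [hstep, cnt_filter S a (N - 1) (by omega)]
  have h2 : a + ((N : ℕ) : ZMod N) = a := by simp
  rw [h2]
  have h3 : S.filter (fun x => x ≠ a ∧ (x - a).val ≤ N - 1) = S.erase a := by
    ext x
    simp only [Finset.mem_filter, Finset.mem_erase]
    constructor
    · rintro ⟨h, h', _⟩; exact ⟨h', h⟩
    · rintro ⟨h', h⟩
      exact ⟨h, h', by have := ZMod.val_lt (x - a); omega⟩
  rw [h3]
  by_cases haS : a ∈ S
  · rw [if_pos haS, Finset.card_erase_of_mem haS]
    have := Finset.card_pos.mpr ⟨a, haS⟩; omega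
  · rw [if_neg haS, Finset.erase_eq_of_notMem haS]; ring

lemma cnt_add_N (S : Finset (ZMod N)) (a : ZMod N) (m : ℕ) :
    cnt S a (m + N) = cnt S a m + S.card := by
  rw [cnt_split, cnt_univ]

lemma cnt_mod (S : Finset (ZMod N)) (a : ZMod N) (k : ℕ) :
    (cnt S a k : ZMod 2) = (cnt S a (k % N) : ZMod 2) + ((k / N : ℕ) : ZMod 2) * (S.card : ZMod 2) := by
  induction k using Nat.strong_induction_on with
  | _ k ih =>
    by_cases hk : k < N
    · rw [Nat.mod_eq_of_lt hk, Nat.div_eq_of_lt hk]; simp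
    · have hN : 0 < N := Nat.pos_of_ne_zero (NeZero.ne N)
      have h1 : k = (k - N) + N := by omega
      have e : cnt S a k = cnt S a (k - N) + S.card := by
        conv_lhs => rw [h1]
        exact cnt_add_N S a (k - N)
      have h2 : (k - N) % N = k % N := by
        conv_rhs => rw [h1]
        rw [Nat.add_mod_right]
      have h3 : (k - N) / N + 1 = k / N := by
        conv_rhs => rw [h1]
        rw [Nat.add_div_right _ hN]
      have h4 : ((k / N : ℕ) : ZMod 2) = (((k - N) / N : ℕ) : ZMod 2) + 1 := by
        rw [← h3, Nat.cast_add, Nat.cast_one]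
      rw [e, Nat.cast_add, ih (k - N) (by omega), h2, h4]
      ring

lemma iter_cover (P : Finset (ZMod N)) (a : ZMod N) (b : Bool) (k : ℕ) :
    (coverSucc P)^[k] (a, b) =
      (a + (k : ℕ), if Odd (cnt P a k) then !b else b) := by
  induction k with
  | zero => simp [cnt_zero]
  | succ k ih =>
      rw [Function.iterate_succ_apply', ih]
      unfold coverSucc
      have hfst : a + (k : ℕ) + 1 = a + ((k + 1 : ℕ) : ZMod N) := by push_cast; ring
      by_cases hmem : a + ((k + 1 : ℕ) : ZMod N) ∈ P
      · rw [if_pos (by rw [hfst]; exact hmem)]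
        have hcnt : cnt P a (k + 1) = cnt P a k + 1 := by rw [cnt_succ, if_pos hmem]
        rw [hcnt]
        have hodd : Odd (cnt P a k + 1) ↔ ¬ Odd (cnt P a k) := by
          rw [Nat.odd_add_one, Nat.not_odd_iff_even]
        simp only [hfst]
        by_cases h : Odd (cnt P a k)
        · rw [if_pos h, if_neg (by rw [hodd]; exact not_not_intro h)]
          simp
        · rw [if_neg h, if_pos (hodd.mpr h)]
      · rw [if_neg (by rw [hfst]; exact hmem)]
        have hcnt : cnt P a (k + 1) = cnt P a k := by rw [cnt_succ, if_neg hmem]; ring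
        rw [hcnt]
        simp only [hfst]

lemma val_add_val_neg (x : ZMod N) (hx : x ≠ 0) : x.val + (-x).val = N := by
  rw [ZMod.neg_val, if_neg hx]
  have := ZMod.val_lt x
  omega

lemma sameComp_iff (P : Finset (ZMod N)) (hP : (P.card : ZMod 2) = 0)
    (a c : ZMod N) (b : Bool) :
    SameComp P (a, b) (c, b) ↔ ¬ Odd (cnt P a ((c - a).val)) := by
  constructor
  · rintro ⟨k, hk | hk⟩
    · rw [iter_cover] at hk
      have h1 : a + (k : ℕ) = c := congrArg Prod.fst hk
      have h2 : ¬ Odd (cnt P a k) := by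
        intro hodd
        have := congrArg Prod.snd hk
        simp only [hodd, if_pos] at this
        exact Bool.not_ne_self b this
      have hmod : k % N = (c - a).val := by
        have : ((k : ℕ) : ZMod N) = c - a := by rw [← h1]; ring
        rw [← this, ZMod.val_natCast]
      intro hodd
      apply h2
      rw [odd_iff_cast] at hodd ⊢
      rw [cnt_mod, hmod, hodd, hP]
      ring
    · rw [iter_cover] at hk
      have h1 : c + (k : ℕ) = a := congrArg Prod.fst hk
      have h2 : ¬ Odd (cnt P c k) := by
        intro hodd
        have := congrArg Prod.snd hk
        simp only [hodd, if_pos] at this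
        exact Bool.not_ne_self b this
      have hmod : k % N = (a - c).val := by
        have : ((k : ℕ) : ZMod N) = a - c := by rw [← h1]; ring
        rw [← this, ZMod.val_natCast]
      intro hodd
      apply h2
      rw [odd_iff_cast] at hodd ⊢
      rw [cnt_mod, hmod, hP, mul_zero, add_zero]
      by_cases hac : a = c
      · exfalso
        subst hac
        simp only [sub_self, ZMod.val_zero, cnt_zero, Nat.cast_zero] at hodd
        exact zero_ne_one hodd
      · -- cnt P a ((c-a).val) + cnt P c ((a-c).val) = P.card
        have hsum : cnt P a ((c - a).val) + cnt P c ((a - c).val) = P.card := by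
          have hmid : a + (((c - a).val : ℕ) : ZMod N) = c := by
            have : (((c - a).val : ℕ) : ZMod N) = c - a := by
              simp [ZMod.natCast_val, ZMod.cast_id]
            rw [this]; ring
          have hvals : (c - a).val + (a - c).val = N := by
            have : a - c = -(c - a) := by ring
            rw [this]
            exact val_add_val_neg _ (sub_ne_zero.mpr (fun h => hac h.symm))
          calc cnt P a ((c - a).val) + cnt P c ((a - c).val)
              = cnt P a ((c - a).val + (a - c).val) := by
                rw [cnt_split, hmid]
            _ = P.card := by rw [hvals, cnt_univ]
        have hcc : (cnt P a ((c - a).val) : ZMod 2) + (cnt P c ((a - c).val) : ZMod 2)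
            = (P.card : ZMod 2) := by rw [← Nat.cast_add, hsum]
        rw [hodd, hP] at hcc
        have h5 : (cnt P c ((a - c).val) : ZMod 2) = -1 :=
          eq_neg_of_add_eq_zero_right hcc
        rw [h5]; decide
  · intro hev
    refine ⟨(c - a).val, Or.inl ?_⟩
    rw [iter_cover, if_neg hev]
    have : a + (((c - a).val : ℕ) : ZMod N) = c := by
      have : (((c - a).val : ℕ) : ZMod N) = c - a := by
        simp [ZMod.natCast_val, ZMod.cast_id]
      rw [this]; ring
    rw [this]

lemma eps_add (P E : Finset (ZMod N)) (ε : ZMod N → ZMod 2)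
    (hε : ∀ x : ZMod N, ε (x + 1) = ε x + (if x + 1 ∈ P then 1 else 0)
        + (if x + 1 ∈ E then 1 else 0)) (a : ZMod N) (k : ℕ) :
    ε (a + (k : ℕ)) = ε a + (cnt P a k : ZMod 2) + (cnt E a k : ZMod 2) := by
  induction k with
  | zero => simp [cnt_zero]
  | succ k ih =>
      have h1 : a + ((k + 1 : ℕ) : ZMod N) = (a + (k : ℕ)) + 1 := by push_cast; ring
      rw [h1, hε, ih, cnt_succ, cnt_succ, ← h1]
      push_cast [apply_ite (Nat.cast : ℕ → ZMod 2)]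
      ring

end LinkAux

/-- The linking number of the converted normal diagram `φ(D,P)` — half the sum
of the signs of its non-self classical crossings, these being the crossings of
the `D`-copy and of the mirror copy `D*` whose two strands lie on different
components (the sign of a mirror crossing equals the sign of the original) —
equals the odd writhe of `D`, the sum of the signs of the odd crossings. -/
theorem linkingNumber_eq_oddWrithe {N : ℕ} [NeZero N]
    (chords : Finset (ZMod N × ZMod N)) (E P : Finset (ZMod N))
    (sgn : ZMod N × ZMod N → ℤ)
    (hE : E = chords.image Prod.fst ∪ chords.image Prod.snd)
    (hproper : ∀ c ∈ chords, c.1 ≠ c.2)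
    (hdistinct : E.card = 2 * chords.card)
    (hPE : Disjoint P E)
    (hsgn : ∀ c ∈ chords, sgn c = 1 ∨ sgn c = -1)
    (hcut : IsCutSystem chords E P) :
    (((∑ c ∈ chords, if ¬ SameComp P (c.1, false) (c.2, false)
          then sgn c else 0)
      + ∑ c ∈ chords, if ¬ SameComp P (c.1, true) (c.2, true)
          then sgn c else 0 : ℤ) : ℚ) / 2
      = ((∑ c ∈ chords, if IsOddChord E c then sgn c else 0 : ℤ) : ℚ) := by
  classical
  obtain ⟨ε, hε, hchords⟩ := hcut
  have hEcard : (E.card : ZMod 2) = 0 := by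
    rw [hdistinct, Nat.cast_mul]
    have h2 : ((2 : ℕ) : ZMod 2) = 0 := by decide
    rw [h2, zero_mul]
  have hPcard : (P.card : ZMod 2) = 0 := by
    have h := LinkAux.eps_add P E ε hε 0 N
    rw [LinkAux.cnt_univ, LinkAux.cnt_univ, ZMod.natCast_self, add_zero, hEcard,
      add_zero] at h
    have := h.symm
    rwa [add_comm, ← eq_sub_iff_add_eq, sub_self] at this
  have key : ∀ c ∈ chords, ∀ b : Bool,
      ¬ SameComp P (c.1, b) (c.2, b) ↔ IsOddChord E c := by
    intro c hc b
    set a := c.1 with ha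
    set d := c.2 with hd
    set r := (d - a).val with hr
    have had : a + ((r : ℕ) : ZMod N) = d := by
      have : ((r : ℕ) : ZMod N) = d - a := by
        simp [hr, ZMod.natCast_val, ZMod.cast_id]
      rw [this]; ring
    have heq := LinkAux.eps_add P E ε hε a r
    rw [had] at heq
    have hne : ε a ≠ ε d := hchords c hc
    have h1 : (LinkAux.cnt P a r : ZMod 2) + (LinkAux.cnt E a r : ZMod 2) = 1 := by
      have ht : (LinkAux.cnt P a r : ZMod 2) + (LinkAux.cnt E a r : ZMod 2) ≠ 0 := by
        intro h0
        apply hne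
        rw [heq, add_assoc, h0, add_zero]
      revert ht
      generalize (LinkAux.cnt P a r : ZMod 2) + (LinkAux.cnt E a r : ZMod 2) = t
      revert t; decide
    have hdE : d ∈ E := by
      rw [hE]
      exact Finset.mem_union_right _ (Finset.mem_image.mpr ⟨c, hc, rfl⟩)
    have hadne : a ≠ d := hproper c hc
    have hfilter : E.filter (fun x => x ≠ a ∧ (x - a).val ≤ r)
        = insert d (E.filter (fun x => strictBtw a d x)) := by
      ext x
      rw [Finset.mem_insert, Finset.mem_filter, Finset.mem_filter]
      simp only [strictBtw]
      constructor
      · rintro ⟨hxE, hxa, hxv⟩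
        rcases Nat.lt_or_ge (x - a).val r with h | h
        · exact Or.inr ⟨hxE, h, hxa⟩
        · left
          have hv : (x - a).val = r := by omega
          have : x - a = d - a := by
            have h1 : (((x - a).val : ℕ) : ZMod N) = x - a := by
              simp [ZMod.natCast_val, ZMod.cast_id]
            have h2 : (((d - a).val : ℕ) : ZMod N) = d - a := by
              simp [ZMod.natCast_val, ZMod.cast_id]
            rw [← h1, ← h2, hv]
          have := sub_left_injective.eq_iff.mp this
          exact this
      · rintro (rfl | ⟨hxE, hxv, hxa⟩)
        · exact ⟨hdE, fun h => hadne h.symm, le_refl r⟩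
        · exact ⟨hxE, hxa, Nat.le_of_lt hxv⟩
    have hnotmem : d ∉ E.filter (fun x => strictBtw a d x) := by
      rw [Finset.mem_filter]
      simp [strictBtw]
    have hcntE : LinkAux.cnt E a r
        = (E.filter (fun x => strictBtw a d x)).card + 1 := by
      rw [LinkAux.cnt_filter E a r (ZMod.val_lt _), hfilter,
        Finset.card_insert_of_notMem hnotmem]
    have h2 : (LinkAux.cnt P a r : ZMod 2)
        = ((E.filter (fun x => strictBtw a d x)).card : ZMod 2) := by
      rw [hcntE] at h1
      push_cast at h1
      have : ∀ u v : ZMod 2, u + (v + 1) = 1 → u = v := by decide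
      exact this _ _ h1
    rw [LinkAux.sameComp_iff P hPcard a d b, not_not]
    unfold IsOddChord
    rw [LinkAux.odd_iff_cast, LinkAux.odd_iff_cast, ← hr, h2]
  have hsum : ∀ b : Bool,
      (∑ c ∈ chords, if ¬ SameComp P (c.1, b) (c.2, b) then sgn c else 0)
        = ∑ c ∈ chords, if IsOddChord E c then sgn c else 0 :=
    fun b => Finset.sum_congr rfl (fun c hc => if_congr (key c hc b) rfl rfl)
  rw [hsum false, hsum true]
  push_cast
  ring
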